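/- Let (M, μ) be a measure space, let n ≥ 1, let g : M → [0, ∞) be μ-integrable, let H₁, …, H_n : M → ℝ be bounded measurable functions, and let σ₁, …, σ_n > 0. Let V : ℝ → ℝ be continuously differentiable and satisfy Hypothesis QC with a comparison function 𝔥 : ℝ → [0, ∞) that is nondecreasing. Set S := Σ_{k=1}^n σ_k · sup_{z∈M} |H_k(z)|. Then for every y ∈ ℝⁿ, every unit vector w ∈ ℝⁿ (i.e. Σ_{k=1}^n (wᵏ)² = 1) and every t ≥ 0, one has −Σ_{k=1}^n wᵏ σ_k ∫_M g(z) · V′( Σ_{j=1}^n σ_j (yʲ + t wʲ) H_j(z) ) · H_k(z) dμ(z) ≤ S · 𝔥(S·‖y‖) · ∫_M g dμ, where ‖y‖ is the Euclidean norm of y. -/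

import Mathlib

open MeasureTheory

/-- The reduced potential `V_n^𝒜` inherits Hypothesis QC from the scalar potential `V`:
the inner directional derivative bound for the finite-dimensional reduction. -/
theorem reduced_potential_QC_bound
    {M : Type*} [MeasurableSpace M] (μ : Measure M) (n : ℕ) (hn : 1 ≤ n)
    (g : M → ℝ) (hg0 : ∀ z, 0 ≤ g z) (hgint : Integrable g μ)
    (H : Fin n → M → ℝ) (hHmeas : ∀ k, Measurable (H k))
    (hHbdd : ∀ k, ∃ C : ℝ, ∀ z, |H k z| ≤ C)
    (σ : Fin n → ℝ) (hσ : ∀ k, 0 < σ k)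
    (V V' : ℝ → ℝ) (hV : ∀ x, HasDerivAt V (V' x) x) (hV'cont : Continuous V')
    (𝔥 : ℝ → ℝ) (h𝔥0 : ∀ x, 0 ≤ 𝔥 x) (h𝔥mono : Monotone 𝔥)
    (hQC : ∀ u r : ℝ, 0 ≤ r → -V' (u + r) ≤ 𝔥 u ∧ V' (u - r) ≤ 𝔥 u)
    (S : ℝ) (hS : S = ∑ k, σ k * ⨆ z, |H k z|)
    (y w : Fin n → ℝ) (hw : ∑ k, w k ^ 2 = 1) (t : ℝ) (ht : 0 ≤ t) :
    -∑ k, w k * σ k *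
        ∫ z, g z * V' (∑ j, σ j * (y j + t * w j) * H j z) * H k z ∂μ ≤
      S * 𝔥 (S * Real.sqrt (∑ k, y k ^ 2)) * ∫ z, g z ∂μ := by
  classical
  rcases isEmpty_or_nonempty M with hM | hM
  · simp [integral_of_isEmpty]
  set nrm := Real.sqrt (∑ k, y k ^ 2) with hnrm
  have hnrm0 : 0 ≤ nrm := Real.sqrt_nonneg _
  set h := 𝔥 (S * nrm) with hh
  have hh0 : 0 ≤ h := h𝔥0 _
  set C : Fin n → ℝ := fun k => ⨆ z, |H k z| with hCdef
  have hCbdd : ∀ k, BddAbove (Set.range fun z => |H k z|) := by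
    intro k
    obtain ⟨c, hc⟩ := hHbdd k
    exact ⟨c, by rintro x ⟨z, rfl⟩; exact hc z⟩
  have hC : ∀ k z, |H k z| ≤ C k := fun k z => le_ciSup (hCbdd k) z
  have hC0 : ∀ k, 0 ≤ C k := fun k =>
    (abs_nonneg (H k (Classical.arbitrary M))).trans (hC k _)
  have hS0 : 0 ≤ S := by
    rw [hS]
    exact Finset.sum_nonneg fun k _ => mul_nonneg (hσ k).le (hC0 k)
  set A : M → ℝ := fun z => ∑ k, w k * σ k * H k z with hA
  set B : M → ℝ := fun z => ∑ j, σ j * y j * H j z with hB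
  set Φ : M → ℝ := fun z => ∑ j, σ j * (y j + t * w j) * H j z with hΦ
  -- basic coordinate bounds
  have hw1 : ∀ k, |w k| ≤ 1 := by
    intro k
    have h1 : w k ^ 2 ≤ 1 := by
      rw [← hw]
      exact Finset.single_le_sum (f := fun k => w k ^ 2)
        (fun i _ => sq_nonneg _) (Finset.mem_univ k)
    nlinarith [sq_abs (w k), abs_nonneg (w k)]
  have hyk : ∀ k, |y k| ≤ nrm := by
    intro k
    have : y k ^ 2 ≤ ∑ j, y j ^ 2 :=
      Finset.single_le_sum (f := fun k => y k ^ 2) (fun i _ => sq_nonneg _)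
        (Finset.mem_univ k)
    calc |y k| = Real.sqrt (y k ^ 2) := (Real.sqrt_sq_eq_abs _).symm
      _ ≤ nrm := Real.sqrt_le_sqrt this
  have hAle : ∀ z, |A z| ≤ S := by
    intro z
    rw [hS]
    calc |A z| ≤ ∑ k, |w k * σ k * H k z| := Finset.abs_sum_le_sum_abs _ _
      _ ≤ ∑ k, σ k * C k := by
          refine Finset.sum_le_sum fun k _ => ?_
          rw [abs_mul, abs_mul, abs_of_pos (hσ k)]
          calc |w k| * σ k * |H k z| ≤ 1 * σ k * (C k) := by
                apply mul_le_mul (mul_le_mul_of_nonneg_right (hw1 k) (hσ k).le)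
                  (hC k z) (abs_nonneg _)
                  (mul_nonneg zero_le_one (hσ k).le)
            _ = σ k * C k := by ring
  have hBle : ∀ z, |B z| ≤ S * nrm := by
    intro z
    have : |B z| ≤ ∑ k, σ k * C k * nrm := by
      calc |B z| ≤ ∑ k, |σ k * y k * H k z| := Finset.abs_sum_le_sum_abs _ _
        _ ≤ ∑ k, σ k * C k * nrm := by
            refine Finset.sum_le_sum fun k _ => ?_
            rw [abs_mul, abs_mul, abs_of_pos (hσ k)]
            calc σ k * |y k| * |H k z| ≤ σ k * nrm * (C k) := by
                  apply mul_le_mul (mul_le_mul_of_nonneg_left (hyk k) (hσ k).le)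
                    (hC k z) (abs_nonneg _) (mul_nonneg (hσ k).le hnrm0)
              _ = σ k * C k * nrm := by ring
    calc |B z| ≤ ∑ k, σ k * C k * nrm := this
      _ = S * nrm := by rw [hS, ← Finset.sum_mul]
  have hΦeq : ∀ z, Φ z = B z + t * A z := by
    intro z
    rw [hΦ, hB, hA, Finset.mul_sum, ← Finset.sum_add_distrib]
    exact Finset.sum_congr rfl fun k _ => by ring
  -- the pointwise QC bound
  have core : ∀ z, -V' (Φ z) * A z ≤ S * h := by
    intro z
    have hbz : 𝔥 (B z) ≤ h := h𝔥mono ((le_abs_self _).trans (hBle z))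
    rcases le_or_gt 0 (A z) with hAz | hAz
    · have hr : 0 ≤ t * A z := mul_nonneg ht hAz
      have hq : -V' (B z + t * A z) ≤ 𝔥 (B z) := (hQC (B z) (t * A z) hr).1
      rw [hΦeq z]
      calc -V' (B z + t * A z) * A z ≤ h * A z :=
            mul_le_mul_of_nonneg_right (hq.trans hbz) hAz
        _ ≤ h * S := mul_le_mul_of_nonneg_left ((le_abs_self _).trans (hAle z)) hh0
        _ = S * h := mul_comm _ _
    · have hr : 0 ≤ -(t * A z) := by nlinarith
      have hq : V' (B z - -(t * A z)) ≤ 𝔥 (B z) := (hQC (B z) (-(t * A z)) hr).2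
      rw [sub_neg_eq_add] at hq
      rw [hΦeq z, show -V' (B z + t * A z) * A z = V' (B z + t * A z) * (-A z) by ring]
      calc V' (B z + t * A z) * (-A z) ≤ h * (-A z) :=
            mul_le_mul_of_nonneg_right (hq.trans hbz) (by linarith)
        _ ≤ h * S := mul_le_mul_of_nonneg_left ((neg_le_abs _).trans (hAle z)) hh0
        _ = S * h := mul_comm _ _
  -- integrability
  have hΦm : Measurable Φ :=
    Finset.measurable_sum _ fun j _ => (hHmeas j).const_mul _
  set K : ℝ := ∑ j, |σ j * (y j + t * w j)| * C j with hK
  have hK0 : 0 ≤ K :=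
    Finset.sum_nonneg fun j _ => mul_nonneg (abs_nonneg _) (hC0 j)
  have hΦbd : ∀ z, Φ z ∈ Set.Icc (-K) K := by
    intro z
    have : |Φ z| ≤ K := by
      calc |Φ z| ≤ ∑ j, |σ j * (y j + t * w j) * H j z| := Finset.abs_sum_le_sum_abs _ _
        _ ≤ K := by
            refine Finset.sum_le_sum fun j _ => ?_
            rw [abs_mul]
            exact mul_le_mul_of_nonneg_left (hC j z) (abs_nonneg _)
    exact abs_le.mp this |>.imp (fun h' => h') (fun h' => h') |> fun ⟨a, b⟩ => ⟨a, b⟩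
  obtain ⟨D, hD⟩ := (isCompact_Icc (a := (-K : ℝ)) (b := K)).exists_bound_of_continuousOn
    hV'cont.continuousOn
  have hD0 : 0 ≤ D := (norm_nonneg (V' 0)).trans (hD 0 ⟨by linarith, hK0⟩)
  have hint : ∀ k, Integrable (fun z => g z * V' (Φ z) * H k z) μ := by
    intro k
    have heq : (fun z => g z * V' (Φ z) * H k z)
        = fun z => (V' (Φ z) * H k z) * g z := by funext z; ring
    rw [heq]
    refine Integrable.bdd_mul (c := D * C k) hgint
      ((hV'cont.measurable.comp hΦm).mul (hHmeas k)).aestronglyMeasurable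
      (ae_of_all _ fun z => ?_)
    rw [norm_mul]
    exact mul_le_mul (hD _ (hΦbd z)) (hC k z) (abs_nonneg _) hD0
  -- rewrite the sum of integrals as one integral
  have e1 : ∫ z, ∑ k, w k * σ k * (g z * V' (Φ z) * H k z) ∂μ
      = ∑ k, w k * σ k * ∫ z, g z * V' (Φ z) * H k z ∂μ := by
    rw [integral_finset_sum _ fun k _ => (hint k).const_mul _]
    exact Finset.sum_congr rfl fun k _ => integral_const_mul _ _
  simp only [show ∀ z, ∑ j, σ j * (y j + t * w j) * H j z = Φ z from fun z => rfl]
  rw [← e1, ← integral_neg,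
    show S * h * ∫ z, g z ∂μ = ∫ z, g z * (S * h) ∂μ by
      rw [integral_mul_const]; ring]
  refine integral_mono ((integrable_finset_sum _ fun k _ => (hint k).const_mul _).neg)
    (hgint.mul_const _) fun z => ?_
  have hsum : ∑ k, w k * σ k * (g z * V' (Φ z) * H k z) = g z * V' (Φ z) * A z := by
    rw [hA, Finset.mul_sum]
    exact Finset.sum_congr rfl fun k _ => by ring
  show -(∑ k, w k * σ k * (g z * V' (Φ z) * H k z)) ≤ g z * (S * h)
  rw [hsum]
  calc -(g z * V' (Φ z) * A z) = g z * (-V' (Φ z) * A z) := by ring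
    _ ≤ g z * (S * h) := mul_le_mul_of_nonneg_left (core z) (hg0 z)
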